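/- (False-positive rate bound) Let Ω be a probability space, let C* : Ω → ℝ (observed cost) and Ĉ₁,...,Ĉ_M : Ω → ℝ be random variables where the Ĉ_j are i.i.d., independent of C*, with P(Ĉ_j ≥ c_a) = p for a fixed threshold c_a ∈ ℝ. Let Ĉ^{(M−n)} denote the (M−n)-th order statistic of Ĉ₁,...,Ĉ_M. Then P(C* ≥ Ĉ^{(M−n)} ∧ C* < c_a) ≤ ∑_{i=0}^{n} C(M,i) p^i (1−p)^{M−i}. -/

import Mathlib

open MeasureTheory ProbabilityTheory Finset

/-- The `k`-th smallest value (0-indexed) among `f 0, …, f (M-1)`. -/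
noncomputable def orderStat {M : ℕ} (f : Fin M → ℝ) (k : Fin M) : ℝ :=
  f (Tuple.sort f k)

/-- False-positive rate bound: if the predicted costs `Ĉ₁,…,Ĉ_M` are i.i.d. with
`P(Ĉⱼ ≥ c_a) = p` and independent of the observed cost `C*`, then
`P(C* ≥ Ĉ^{(M−n)} ∧ C* < c_a) ≤ ∑_{i=0}^{n} C(M,i) pⁱ (1-p)^{M-i}`. -/
theorem stmt2 {Ω : Type*} [MeasurableSpace Ω] (P : Measure Ω) [IsProbabilityMeasure P]
    (M n : ℕ) (hM : 1 ≤ M) (hn : n ≤ M - 1)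
    (p : ℝ) (hp : p ∈ Set.Icc (0 : ℝ) 1) (c_a : ℝ)
    (Cstar : Ω → ℝ) (Chat : Fin M → Ω → ℝ)
    (hmeasC : Measurable Cstar) (hmeas : ∀ j, Measurable (Chat j))
    (ν : Measure ℝ)
    (hident : ∀ j, P.map (Chat j) = ν)
    (hind : iIndepFun Chat P)
    (hindC : IndepFun Cstar (fun ω (j : Fin M) => Chat j ω) P)
    (hquant : ∀ j, P {ω | c_a ≤ Chat j ω} = ENNReal.ofReal p) :
    P {ω | orderStat (fun j => Chat j ω) ⟨M - n - 1, by omega⟩ ≤ Cstar ω ∧ Cstar ω < c_a}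
      ≤ ENNReal.ofReal (∑ i ∈ Finset.range (n + 1),
          (M.choose i : ℝ) * p ^ i * (1 - p) ^ (M - i)) := by
  obtain ⟨hp0, hp1⟩ := hp
  set B : Finset (Fin M) → Fin M → Set ℝ :=
    fun S j => if j ∈ S then Set.Ici c_a else Set.Iio c_a with hB
  set E : Finset (Fin M) → Set Ω := fun S => ⋂ j, Chat j ⁻¹' B S j with hE
  -- probability of each preimage
  have hIci : ∀ j, P (Chat j ⁻¹' Set.Ici c_a) = ENNReal.ofReal p := fun j => hquant j
  have hIio : ∀ j, P (Chat j ⁻¹' Set.Iio c_a) = ENNReal.ofReal (1 - p) := by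
    intro j
    have hc : Chat j ⁻¹' Set.Iio c_a = (Chat j ⁻¹' Set.Ici c_a)ᶜ := by
      ext ω; simp [not_le]
    rw [hc, measure_compl ((hmeas j) measurableSet_Ici) (measure_ne_top _ _), hIci,
      measure_univ, ENNReal.ofReal_sub _ hp0, ENNReal.ofReal_one]
  -- probability of E S
  have hES : ∀ S : Finset (Fin M),
      P (E S) = ENNReal.ofReal p ^ S.card * ENNReal.ofReal (1 - p) ^ (M - S.card) := by
    intro S
    have hmeasB : ∀ j : Fin M, j ∈ (Finset.univ : Finset (Fin M)) → MeasurableSet (B S j) := by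
      intro j _
      by_cases h : j ∈ S <;> simp [hB, h, measurableSet_Ici, measurableSet_Iio]
    have h1 : P (⋂ j ∈ (Finset.univ : Finset (Fin M)), Chat j ⁻¹' B S j)
        = ∏ j : Fin M, P (Chat j ⁻¹' B S j) :=
      hind.measure_inter_preimage_eq_mul Finset.univ hmeasB
    have h2 : E S = ⋂ j ∈ (Finset.univ : Finset (Fin M)), Chat j ⁻¹' B S j := by
      simp [hE]
    have h3 : ∀ j : Fin M, P (Chat j ⁻¹' B S j)
        = if j ∈ S then ENNReal.ofReal p else ENNReal.ofReal (1 - p) := by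
      intro j; by_cases h : j ∈ S <;> simp [hB, h, hIci, hIio]
    rw [h2, h1, Finset.prod_congr rfl (fun j _ => h3 j), Finset.prod_ite,
      Finset.prod_const, Finset.prod_const]
    have hf1 : (Finset.univ.filter (fun j => j ∈ S)).card = S.card := by
      congr 1; ext j; simp
    have hf2 : (Finset.univ.filter (fun j => j ∉ S)).card = M - S.card := by
      have : (Finset.univ.filter (fun j => j ∉ S)) = Sᶜ := by ext j; simp
      rw [this, Finset.card_compl, Fintype.card_fin]
    rw [hf1, hf2]
  -- the inclusion of the event into the union of the E S
  have hsub : {ω | orderStat (fun j => Chat j ω) ⟨M - n - 1, by omega⟩ ≤ Cstar ω ∧ Cstar ω < c_a}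
      ⊆ ⋃ i ∈ Finset.range (n + 1), ⋃ S ∈ Finset.powersetCard i (Finset.univ : Finset (Fin M)),
          E S := by
    intro ω ⟨h1, h2⟩
    set f : Fin M → ℝ := fun j => Chat j ω with hf
    set k : Fin M := ⟨M - n - 1, by omega⟩ with hk
    have hlt : f (Tuple.sort f k) < c_a := lt_of_le_of_lt h1 h2
    set S : Finset (Fin M) := Finset.univ.filter (fun j => c_a ≤ f j) with hS
    set T : Finset (Fin M) := (Finset.Iic k).image (Tuple.sort f) with hT
    have hTcard : T.card = M - n := by
      rw [hT, Finset.card_image_of_injective _ (Tuple.sort f).injective, Fin.card_Iic]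
      simp [hk]; omega
    have hdisj : Disjoint S T := by
      rw [Finset.disjoint_left]
      intro j hjS hjT
      rw [hT, Finset.mem_image] at hjT
      obtain ⟨i, hi, rfl⟩ := hjT
      rw [Finset.mem_Iic] at hi
      have : f (Tuple.sort f i) ≤ f (Tuple.sort f k) := Tuple.monotone_sort f hi
      have : f (Tuple.sort f i) < c_a := lt_of_le_of_lt this hlt
      rw [hS, Finset.mem_filter] at hjS
      exact absurd hjS.2 (not_le.mpr this)
    have hScard : S.card ≤ n := by
      have := Finset.card_union_of_disjoint hdisj
      have hle : (S ∪ T).card ≤ M := by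
        have := Finset.card_le_univ (S ∪ T)
        simpa using this
      omega
    refine Set.mem_iUnion₂.mpr ⟨S.card, Finset.mem_range.mpr (by omega),
      Set.mem_iUnion₂.mpr ⟨S, Finset.mem_powersetCard.mpr ⟨Finset.subset_univ S, rfl⟩, ?_⟩⟩
    rw [hE]
    refine Set.mem_iInter.mpr fun j => ?_
    by_cases h : j ∈ S
    · have : c_a ≤ f j := (Finset.mem_filter.mp h).2
      simp [hB, h, Set.mem_preimage, this]; exact this
    · have : ¬ c_a ≤ f j := by
        intro hc
        exact h (by rw [hS]; exact Finset.mem_filter.mpr ⟨Finset.mem_univ j, hc⟩)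
      simp [hB, h, Set.mem_preimage, not_le.mp this]; exact not_le.mp this
  calc P {ω | orderStat (fun j => Chat j ω) ⟨M - n - 1, by omega⟩ ≤ Cstar ω ∧ Cstar ω < c_a}
      ≤ P (⋃ i ∈ Finset.range (n + 1),
          ⋃ S ∈ Finset.powersetCard i (Finset.univ : Finset (Fin M)), E S) :=
        measure_mono hsub
    _ ≤ ∑ i ∈ Finset.range (n + 1),
          P (⋃ S ∈ Finset.powersetCard i (Finset.univ : Finset (Fin M)), E S) :=
        measure_biUnion_finset_le _ _
    _ ≤ ∑ i ∈ Finset.range (n + 1),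
          ∑ S ∈ Finset.powersetCard i (Finset.univ : Finset (Fin M)), P (E S) :=
        Finset.sum_le_sum fun i _ => measure_biUnion_finset_le _ _
    _ = ∑ i ∈ Finset.range (n + 1),
          (M.choose i : ENNReal) * (ENNReal.ofReal p ^ i * ENNReal.ofReal (1 - p) ^ (M - i)) := by
        refine Finset.sum_congr rfl fun i _ => ?_
        rw [Finset.sum_congr rfl fun S hS => by
          rw [hES S, (Finset.mem_powersetCard.mp hS).2]]
        rw [Finset.sum_const, Finset.card_powersetCard, Finset.card_univ, Fintype.card_fin,
          nsmul_eq_mul]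
    _ = ENNReal.ofReal (∑ i ∈ Finset.range (n + 1),
          (M.choose i : ℝ) * p ^ i * (1 - p) ^ (M - i)) := by
        rw [ENNReal.ofReal_sum_of_nonneg fun i _ =>
          mul_nonneg (mul_nonneg (by positivity) (by positivity))
            (pow_nonneg (by linarith) _)]
        refine Finset.sum_congr rfl fun i _ => ?_
        rw [ENNReal.ofReal_mul (by positivity), ENNReal.ofReal_mul (by positivity),
          ENNReal.ofReal_pow hp0, ENNReal.ofReal_pow (by linarith), ENNReal.ofReal_natCast,
          mul_assoc]
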